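/- For D ~ Poisson(μ), μ > 0, θ ≥ 2, and g(x) = 1{x ≥ θ}, the three reproduction numbers satisfy R_0^{h2} = μ·P(D ≥ θ) ≤ R_0^{h1} = μ·P(D ≥ θ-1) ≤ R_0^{deg} = μ·P(D ≥ θ-2). -/
import Mathlib


/-- For `D ~ Poisson(μ)`, `θ ≥ 2` and `g(x)=1{x ≥ θ}`, the three
reproduction numbers satisfy
`R_0^{h2} = μ P(D ≥ θ) ≤ R_0^{h1} = μ P(D ≥ θ-1) ≤ R_0^{deg} = μ P(D ≥ θ-2)`.
Here `D̃` has the size-biased pmf `p̃_k = k p_k / μ`,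
`R_0^{h2} = E[D̃-1]·E[g(D)]`, `R_0^{h1} = E[g(D̃)]·E[D̃-1]`,
`R_0^{deg} = E[(D̃-1) g(D̃)]`. -/
theorem poisson_threshold_reproduction_numbers
    (μ : ℝ) (hμ : 0 < μ)
    (p : ℕ → ℝ) (hp : ∀ k, p k = Real.exp (-μ) * μ^k / (Nat.factorial k))
    (θ : ℕ) (hθ : 2 ≤ θ)
    (tail : ℕ → ℝ) (htail : ∀ m, tail m = ∑' (k : ℕ), if m ≤ k then p k else 0)
    (R0h2 R0h1 R0deg : ℝ)
    (hR0h2 : R0h2 = (∑' (k : ℕ), ((k : ℝ) - 1) * ((k : ℝ) * p k / μ)) * tail θ)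
    (hR0h1 : R0h1 = (∑' (k : ℕ), (if θ ≤ k then (1:ℝ) else 0) * ((k : ℝ) * p k / μ))
        * (∑' (k : ℕ), ((k : ℝ) - 1) * ((k : ℝ) * p k / μ)))
    (hR0deg : R0deg = ∑' (k : ℕ),
        ((k : ℝ) - 1) * (if θ ≤ k then (1:ℝ) else 0) * ((k : ℝ) * p k / μ)) :
    R0h2 = μ * tail θ ∧ R0h1 = μ * tail (θ - 1) ∧ R0deg = μ * tail (θ - 2) ∧
      R0h2 ≤ R0h1 ∧ R0h1 ≤ R0deg := by
  have hμ' : μ ≠ 0 := ne_of_gt hμ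
  have hpnn : ∀ k, 0 ≤ p k := by
    intro k; rw [hp]
    positivity
  -- recursion
  have hstep : ∀ k : ℕ, ((k : ℝ) + 1) * p (k + 1) = μ * p k := by
    intro k
    rw [hp, hp, Nat.factorial_succ]
    have hf : (Nat.factorial k : ℝ) ≠ 0 := Nat.cast_ne_zero.mpr (Nat.factorial_ne_zero k)
    push_cast
    field_simp
    ring
  -- summability of p and its sum
  have hsum_p : Summable p := by
    have := (Real.summable_pow_div_factorial μ).mul_left (Real.exp (-μ))
    apply this.congr
    intro k
    rw [hp, mul_div_assoc]
  have htsum_p : ∑' k, p k = 1 := by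
    have h1 : ∑' k : ℕ, μ ^ k / (Nat.factorial k) = Real.exp μ := by
      rw [Real.exp_eq_exp_ℝ, NormedSpace.exp_eq_tsum_div]
    calc ∑' k, p k = ∑' k : ℕ, Real.exp (-μ) * (μ ^ k / (Nat.factorial k)) := by
          congr 1; funext k; rw [hp, mul_div_assoc]
      _ = Real.exp (-μ) * Real.exp μ := by rw [tsum_mul_left, h1]
      _ = 1 := by rw [← Real.exp_add]; simp
  -- summability and sum of k * p k
  have hsum_kp : Summable (fun k : ℕ => (k : ℝ) * p k) := by
    rw [← (summable_nat_add_iff 1)]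
    apply (hsum_p.mul_left μ).congr
    intro k
    push_cast
    rw [hstep]
  have htsum_kp : ∑' k : ℕ, (k : ℝ) * p k = μ := by
    rw [Summable.tsum_eq_zero_add hsum_kp]
    simp only [Nat.cast_zero, zero_mul, zero_add]
    have : ∀ n : ℕ, ((n : ℝ) + 1) * p (n + 1) = μ * p n := hstep
    calc ∑' n : ℕ, ((n : ℕ) + 1 : ℕ) * p (n + 1)
        = ∑' n : ℕ, μ * p n := by
          congr 1; funext n; push_cast; rw [hstep]
      _ = μ := by rw [tsum_mul_left, htsum_p, mul_one]
  -- the size-biased mean sum A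
  set A : ℕ → ℝ := fun k => ((k : ℝ) - 1) * ((k : ℝ) * p k / μ) with hA
  have hA2 : ∀ k : ℕ, A (k + 2) = μ * p k := by
    intro k
    simp only [hA]
    push_cast
    have h2 : ((k : ℝ) + 2) * p (k + 2) = μ * p (k + 1) := by
      have := hstep (k + 1); push_cast at this; linarith [this]
    have h1 : ((k : ℝ) + 1) * p (k + 1) = μ * p k := hstep k
    field_simp
    nlinarith [h1, h2]
  have hsumA1 : Summable (fun k : ℕ => A (k + 1)) := by
    rw [← (summable_nat_add_iff 1)]
    apply (hsum_p.mul_left μ).congr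
    intro k
    exact (hA2 k).symm
  have hsumA : Summable A := (summable_nat_add_iff 1).mp hsumA1
  have htsumA : ∑' k, A k = μ := by
    rw [Summable.tsum_eq_zero_add hsumA]
    have hA0 : A 0 = 0 := by simp [hA]
    rw [hA0, zero_add, Summable.tsum_eq_zero_add hsumA1]
    have hA1 : A (0 + 1) = 0 := by simp [hA]
    rw [hA1, zero_add]
    calc ∑' n : ℕ, A (n + 1 + 1) = ∑' n : ℕ, μ * p n := by
          congr 1; funext n; exact hA2 n
      _ = μ := by rw [tsum_mul_left, htsum_p, mul_one]
  -- tails: summability and monotonicity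
  have hsum_tail : ∀ m : ℕ, Summable (fun k : ℕ => if m ≤ k then p k else 0) := by
    intro m
    apply Summable.of_nonneg_of_le _ _ hsum_p
    · intro k; split <;> simp [hpnn k]
    · intro k; split <;> simp [hpnn k]
  have htail_mono : ∀ a b : ℕ, a ≤ b → tail b ≤ tail a := by
    intro a b hab
    rw [htail, htail]
    apply Summable.tsum_le_tsum _ (hsum_tail b) (hsum_tail a)
    intro k
    by_cases hk : b ≤ k
    · rw [if_pos hk, if_pos (le_trans hab hk)]
    · rw [if_neg hk]
      split <;> simp [hpnn k]
  have htail_nonneg : ∀ m : ℕ, 0 ≤ tail m := by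
    intro m
    rw [htail]
    apply tsum_nonneg
    intro k; split <;> simp [hpnn k]
  -- B sum
  set B : ℕ → ℝ := fun k => (if θ ≤ k then (1 : ℝ) else 0) * ((k : ℝ) * p k / μ) with hB
  have hB1 : ∀ k : ℕ, B (k + 1) = (if θ - 1 ≤ k then (1 : ℝ) else 0) * p k := by
    intro k
    simp only [hB]
    have hiff : θ ≤ k + 1 ↔ θ - 1 ≤ k := by omega
    rw [if_congr hiff rfl rfl]
    push_cast
    rw [hstep k, mul_comm μ (p k), mul_div_assoc, div_self hμ', mul_one]
  have hsumB1 : Summable (fun k : ℕ => B (k + 1)) := by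
    apply (hsum_tail (θ - 1)).congr
    intro k
    rw [hB1]
    split <;> simp
  have hsumB : Summable B := (summable_nat_add_iff 1).mp hsumB1
  have htsumB : ∑' k, B k = tail (θ - 1) := by
    rw [Summable.tsum_eq_zero_add hsumB]
    have hB0 : B 0 = 0 := by simp [hB]
    rw [hB0, zero_add, htail]
    calc ∑' n : ℕ, B (n + 1)
        = ∑' n : ℕ, if θ - 1 ≤ n then p n else 0 := by
          congr 1; funext n; rw [hB1]; split <;> simp
      _ = _ := rfl
  -- C sum
  set C : ℕ → ℝ := fun k => ((k : ℝ) - 1) * (if θ ≤ k then (1 : ℝ) else 0) * ((k : ℝ) * p k / μ) with hC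
  have hC2 : ∀ k : ℕ, C (k + 2) = (if θ - 2 ≤ k then (1 : ℝ) else 0) * (μ * p k) := by
    intro k
    simp only [hC]
    have hiff : θ ≤ k + 2 ↔ θ - 2 ≤ k := by omega
    rw [if_congr hiff rfl rfl]
    have := hA2 k
    simp only [hA] at this
    push_cast at this ⊢
    split
    · rw [mul_one, one_mul]
      linarith [this]
    · simp
  have hsumC1 : Summable (fun k : ℕ => C (k + 2)) := by
    apply ((hsum_tail (θ - 2)).mul_left μ).congr
    intro k
    rw [hC2]
    split <;> simp
  have hsumC : Summable C := (summable_nat_add_iff 2).mp hsumC1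
  have htsumC : ∑' k, C k = μ * tail (θ - 2) := by
    rw [Summable.tsum_eq_zero_add hsumC]
    have hC0 : C 0 = 0 := by simp [hC]
    rw [hC0, zero_add, Summable.tsum_eq_zero_add ((summable_nat_add_iff 1).mpr hsumC)]
    have hC1 : C (0 + 1) = 0 := by simp [hC]
    rw [hC1, zero_add]
    calc ∑' n : ℕ, C (n + 1 + 1)
        = ∑' n : ℕ, μ * (if θ - 2 ≤ n then p n else 0) := by
          congr 1; funext n
          have := hC2 n
          rw [show n + 1 + 1 = n + 2 from rfl, this]
          split <;> simp
      _ = μ * tail (θ - 2) := by rw [tsum_mul_left, htail]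
  -- conclusions
  have e2 : R0h2 = μ * tail θ := by rw [hR0h2, htsumA, mul_comm]
  have e1 : R0h1 = μ * tail (θ - 1) := by
    rw [hR0h1, htsumA, htsumB, mul_comm]
  have ed : R0deg = μ * tail (θ - 2) := by rw [hR0deg, htsumC]
  refine ⟨e2, e1, ed, ?_, ?_⟩
  · rw [e2, e1]
    exact mul_le_mul_of_nonneg_left (htail_mono _ _ (by omega)) (le_of_lt hμ)
  · rw [e1, ed]
    exact mul_le_mul_of_nonneg_left (htail_mono _ _ (by omega)) (le_of_lt hμ)
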